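/- The weighted coverage function f(S) = Σ_{i ∈ N} max_{q : i ∈ C_i(S)} μ_{i,q} (with the max over the set of sensor types covering site i under placement S, equal to 0 if no type covers i) is a monotone k-submodular function on X(N,k), where placing sensors S_q of type q covers a fixed set of sites determined by a coverage relation, and μ_{i,q} ≥ 0. -/
import Mathlib


open Finset

/-- A `k`-tuple of subsets of `N` is "k-disjoint" if its components are pairwise disjoint,
i.e. it belongs to `X(N,k)`. -/
def IsKDisjoint {N : Type*} {k : ℕ} (S : Fin k → Finset N) : Prop :=
  ∀ q q' : Fin k, q ≠ q' → Disjoint (S q) (S q')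

/-- Componentwise intersection `X ⊓ Y`. -/
def kInf {N : Type*} [DecidableEq N] {k : ℕ} (X Y : Fin k → Finset N) : Fin k → Finset N :=
  fun q => X q ∩ Y q

/-- The operation `X ⊔ Y`, whose `q`-th component is
`(X_q ∪ Y_q) \ ⋃_{p ≠ q} (X_p ∪ Y_p)`. -/
def kSup {N : Type*} [DecidableEq N] {k : ℕ} (X Y : Fin k → Finset N) : Fin k → Finset N :=
  fun q => (X q ∪ Y q) \ ((Finset.univ.erase q).biUnion fun p => X p ∪ Y p)

/-- `f` is a `k`-submodular function on `X(N,k)`. -/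
def KSubmodular {N : Type*} [DecidableEq N] {k : ℕ} (f : (Fin k → Finset N) → ℝ) : Prop :=
  ∀ X Y : Fin k → Finset N, IsKDisjoint X → IsKDisjoint Y →
    f (kInf X Y) + f (kSup X Y) ≤ f X + f Y

/-- `f` is monotone on `X(N,k)` with respect to componentwise inclusion. -/
def KMonotone {N : Type*} [DecidableEq N] {k : ℕ} (f : (Fin k → Finset N) → ℝ) : Prop :=
  ∀ X Y : Fin k → Finset N, IsKDisjoint X → IsKDisjoint Y →
    (∀ r, X r ⊆ Y r) → f X ≤ f Y

/-- Marginal gain `ρ_{q,i}(X) = f(X_1,…,X_q ∪ {i},…,X_k) − f(X)`. -/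
def marg {N : Type*} [DecidableEq N] {k : ℕ} (f : (Fin k → Finset N) → ℝ)
    (X : Fin k → Finset N) (q : Fin k) (i : N) : ℝ :=
  f (Function.update X q (insert i (X q))) - f X

/-- Maximum of `g` over a finite set, with the convention that the max over `∅` is `0`. -/
noncomputable def maxOr0 {α : Type*} (S : Finset α) (g : α → ℝ) : ℝ :=
  if h : S.Nonempty then S.sup' h g else 0

lemma maxOr0_nonneg {α : Type*} (S : Finset α) (g : α → ℝ) (hg : ∀ a, 0 ≤ g a) :
    0 ≤ maxOr0 S g := by
  unfold maxOr0
  split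
  · next h => exact le_trans (hg h.choose) (Finset.le_sup' g h.choose_spec)
  · exact le_refl 0

lemma le_maxOr0 {α : Type*} {S : Finset α} {g : α → ℝ} {a : α} (ha : a ∈ S) :
    g a ≤ maxOr0 S g := by
  unfold maxOr0
  rw [dif_pos ⟨a, ha⟩]
  exact Finset.le_sup' g ha

lemma maxOr0_le {α : Type*} {S : Finset α} {g : α → ℝ} {x : ℝ} (hx : 0 ≤ x)
    (h : ∀ a ∈ S, g a ≤ x) : maxOr0 S g ≤ x := by
  unfold maxOr0
  split
  · exact Finset.sup'_le _ _ h
  · exact hx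

lemma maxOr0_mono {α : Type*} {S T : Finset α} {g : α → ℝ} (hST : S ⊆ T)
    (hg : ∀ a, 0 ≤ g a) : maxOr0 S g ≤ maxOr0 T g :=
  maxOr0_le (maxOr0_nonneg T g hg) (fun a ha => le_maxOr0 (hST ha))

/-- The weighted coverage function `f(S) = ∑_{i ∈ N} max_{q ∈ C_i(S)} μ_{i,q}`
is a monotone `k`-submodular function. -/
theorem weightedCoverage_monotone_kSubmodular
    {N : Type*} [Fintype N] [DecidableEq N] {k : ℕ}
    (R : Fin k → N → N → Prop) [∀ q, DecidableRel (R q)]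
    (μ : N → Fin k → ℝ) (hμ : ∀ i q, 0 ≤ μ i q)
    (f : (Fin k → Finset N) → ℝ)
    (hf : ∀ S : Fin k → Finset N,
      f S = ∑ i : N,
        maxOr0 (Finset.univ.filter (fun q : Fin k => ∃ j ∈ S q, R q j i)) (μ i)) :
    KMonotone f ∧ KSubmodular f := by
  constructor
  · intro X Y _ _ hXY
    rw [hf X, hf Y]
    refine Finset.sum_le_sum fun i _ => maxOr0_mono ?_ (hμ i)
    intro q hq
    simp only [Finset.mem_filter, Finset.mem_univ, true_and] at hq ⊢
    obtain ⟨j, hj, hR⟩ := hq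
    exact ⟨j, hXY q hj, hR⟩
  · intro X Y _ _
    rw [hf X, hf Y, hf (kInf X Y), hf (kSup X Y), ← Finset.sum_add_distrib,
      ← Finset.sum_add_distrib]
    refine Finset.sum_le_sum fun i _ => ?_
    set mP := maxOr0 (Finset.univ.filter (fun q : Fin k => ∃ j ∈ X q, R q j i)) (μ i) with hmP
    set mQ := maxOr0 (Finset.univ.filter (fun q : Fin k => ∃ j ∈ Y q, R q j i)) (μ i) with hmQ
    have hinf : maxOr0 (Finset.univ.filter (fun q : Fin k => ∃ j ∈ kInf X Y q, R q j i)) (μ i)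
        ≤ min mP mQ := by
      refine le_min ?_ ?_ <;>
      · refine maxOr0_mono ?_ (hμ i)
        intro q hq
        simp only [Finset.mem_filter, Finset.mem_univ, true_and, kInf,
          Finset.mem_inter] at hq ⊢
        obtain ⟨j, ⟨hjX, hjY⟩, hR⟩ := hq
        first
          | exact ⟨j, hjX, hR⟩
          | exact ⟨j, hjY, hR⟩
    have hsup : maxOr0 (Finset.univ.filter (fun q : Fin k => ∃ j ∈ kSup X Y q, R q j i)) (μ i)
        ≤ max mP mQ := by
      refine maxOr0_le (le_trans (maxOr0_nonneg _ _ (hμ i)) (le_max_left _ _)) ?_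
      intro q hq
      simp only [Finset.mem_filter, Finset.mem_univ, true_and, kSup,
        Finset.mem_sdiff, Finset.mem_union] at hq
      obtain ⟨j, ⟨hjXY, _⟩, hR⟩ := hq
      rcases hjXY with hjX | hjY
      · refine le_trans (le_maxOr0 ?_) (le_max_left _ _)
        simp only [Finset.mem_filter, Finset.mem_univ, true_and]
        exact ⟨j, hjX, hR⟩
      · refine le_trans (le_maxOr0 ?_) (le_max_right _ _)
        simp only [Finset.mem_filter, Finset.mem_univ, true_and]
        exact ⟨j, hjY, hR⟩
    calc _ ≤ min mP mQ + max mP mQ := add_le_add hinf hsup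
      _ = mP + mQ := min_add_max mP mQ
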